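/- arXiv:2207.11536 — 3 statements merged into one kernel-verified Lean document; each statement's English description precedes it below -/
import Mathlib

section
/- Let α : [0,∞) → [0,∞) be concave. For any probability space (Ω, P), any nonnegative random variables ξ, η with η ∈ L^p(P) for some p ≥ 1, one has E[α(ξ)·η] ≤ ‖η‖_{L^p(P)} · α(‖ξ‖_{L^{p/(p-1)}(P)}). -/
open MeasureTheory
open scoped ENNReal



lemma concave_mono {α : ℝ → ℝ} (hconc : ConcaveOn ℝ (Set.Ici 0) α)
    (hnonneg : ∀ s, 0 ≤ s → 0 ≤ α s) {a b : ℝ} (ha : 0 ≤ a) (hab : a ≤ b) :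
    α a ≤ α b := by
  rcases eq_or_lt_of_le hab with rfl | hab'
  · exact le_refl _
  refine le_of_forall_pos_le_add fun ε hε => ?_
  have hαa : 0 ≤ α a := hnonneg a ha
  set t : ℝ := min (ε / (α a + 1)) 2⁻¹ with htdef
  have ht0 : 0 < t := lt_min (by positivity) (by norm_num)
  have ht1 : t < 1 := lt_of_le_of_lt (min_le_right _ _) (by norm_num)
  set B : ℝ := a + (b - a) / t with hBdef
  have hB : 0 ≤ B := by
    have h : 0 ≤ (b - a) / t := div_nonneg (by linarith) ht0.le
    rw [hBdef]; linarith
  have key := hconc.2 (Set.mem_Ici.2 hB) (Set.mem_Ici.2 ha) ht0.le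
    (by linarith : (0:ℝ) ≤ 1 - t) (by ring)
  have hcomb : t • B + (1 - t) • a = b := by
    simp only [smul_eq_mul, hBdef]
    field_simp
    ring
  rw [hcomb] at key
  simp only [smul_eq_mul] at key
  have hB0 : 0 ≤ α B := hnonneg B hB
  have ht : t * α a ≤ ε := by
    have h1 : t ≤ ε / (α a + 1) := min_le_left _ _
    have h2 : t * (α a + 1) ≤ ε := by
      rw [← le_div_iff₀ (by positivity)]; exact h1
    nlinarith
  nlinarith

lemma concave_scale {α : ℝ → ℝ} (hconc : ConcaveOn ℝ (Set.Ici 0) α)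
    (h0 : 0 ≤ α 0) {x lam : ℝ} (hx : 0 ≤ x) (hlam : 1 ≤ lam) :
    α (lam * x) ≤ lam * α x := by
  have hlam0 : 0 < lam := lt_of_lt_of_le one_pos hlam
  have hinv : lam⁻¹ ≤ 1 := by rw [inv_le_one_iff₀]; right; exact hlam
  have hinv0 : 0 < lam⁻¹ := by positivity
  have key := hconc.2 (Set.mem_Ici.2 (by positivity : (0:ℝ) ≤ lam * x))
    (Set.mem_Ici.2 (le_refl (0:ℝ))) hinv0.le (by linarith : (0:ℝ) ≤ 1 - lam⁻¹)
    (by ring)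
  have hcomb : lam⁻¹ • (lam * x) + (1 - lam⁻¹) • (0:ℝ) = x := by
    simp only [smul_eq_mul]; field_simp; ring
  rw [hcomb] at key
  simp only [smul_eq_mul] at key
  have h2 : lam⁻¹ * α (lam * x) ≤ α x := by nlinarith
  calc α (lam * x) = lam * (lam⁻¹ * α (lam * x)) := by field_simp
    _ ≤ lam * α x := by nlinarith

lemma concave_supergradient {α : ℝ → ℝ} (hconc : ConcaveOn ℝ (Set.Ici 0) α)
    {x : ℝ} (hx : 0 < x) :
    ∃ m : ℝ, ∀ s, 0 ≤ s → α s ≤ α x + m * (s - x) := by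
  set S : Set ℝ := (fun t => (α t - α x) / (t - x)) '' Set.Ioi x with hSdef
  have hne : S.Nonempty := ⟨_, ⟨x + 1, by simp, rfl⟩⟩
  have hbdd : BddAbove S := by
    refine ⟨(α x - α (x/2)) / (x - x/2), ?_⟩
    rintro _ ⟨t, ht, rfl⟩
    exact hconc.slope_anti_adjacent (Set.mem_Ici.2 (by linarith))
      (Set.mem_Ici.2 (by linarith [Set.mem_Ioi.1 ht])) (by linarith) (Set.mem_Ioi.1 ht)
  set m : ℝ := sSup S with hmdef
  refine ⟨m, fun s hs => ?_⟩
  rcases lt_trichotomy s x with hsx | rfl | hsx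
  · -- s < x : m ≤ slope(s, x)
    have hub : ∀ y ∈ S, y ≤ (α x - α s) / (x - s) := by
      rintro _ ⟨t, ht, rfl⟩
      exact hconc.slope_anti_adjacent (Set.mem_Ici.2 hs)
        (Set.mem_Ici.2 (by linarith [Set.mem_Ioi.1 ht])) hsx (Set.mem_Ioi.1 ht)
    have hm : m ≤ (α x - α s) / (x - s) := csSup_le hne hub
    have hxs : 0 < x - s := by linarith
    rw [le_div_iff₀ hxs] at hm
    nlinarith
  · simp
  · -- x < s : slope(x, s) ≤ m
    have hm : (α s - α x) / (s - x) ≤ m := le_csSup hbdd ⟨s, Set.mem_Ioi.2 hsx, rfl⟩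
    have hsx' : 0 < s - x := by linarith
    rw [div_le_iff₀ hsx'] at hm
    linarith

lemma integral_eq_toReal_eLpNorm_one {Ω : Type*} [MeasurableSpace Ω] {μ : Measure Ω}
    {f : Ω → ℝ} (hm : AEStronglyMeasurable f μ) (h0 : ∀ ω, 0 ≤ f ω) :
    ∫ ω, f ω ∂μ = (eLpNorm f 1 μ).toReal := by
  rw [eLpNorm_one_eq_lintegral_enorm,
    integral_eq_lintegral_of_nonneg_ae (ae_of_all _ h0) hm]
  congr 1
  refine lintegral_congr fun ω => ?_
  rw [← ofReal_norm, Real.norm_of_nonneg (h0 ω)]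


/-- Hölder inequality for concave functions: for a concave
`α : [0,∞) → [0,∞)`, nonnegative random variables `ξ, η` with `η ∈ L^p` and
`ξ ∈ L^q` for conjugate exponents `1/p + 1/q = 1`, `p ≥ 1`,
`E[α(ξ)·η] ≤ ‖η‖_{L^p} · α(‖ξ‖_{L^q})`. -/
theorem concave_holder {Ω : Type*} [MeasurableSpace Ω]
    (μ : Measure Ω) [IsProbabilityMeasure μ]
    (α : ℝ → ℝ) (hconc : ConcaveOn ℝ (Set.Ici 0) α)
    (hnonneg : ∀ s, 0 ≤ s → 0 ≤ α s)
    (ξ η : Ω → ℝ) (hξm : AEMeasurable ξ μ) (hηm : AEMeasurable η μ)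
    (hξ0 : ∀ ω, 0 ≤ ξ ω) (hη0 : ∀ ω, 0 ≤ η ω)
    (p q : ℝ≥0∞) (hp : 1 ≤ p) (hpq : 1/p + 1/q = 1)
    (hηp : MemLp η p μ) (hξq : MemLp ξ q μ)
    (hint : Integrable (fun ω => α (ξ ω) * η ω) μ) :
    ∫ ω, α (ξ ω) * η ω ∂μ ≤ (eLpNorm η p μ).toReal * α ((eLpNorm ξ q μ).toReal) := by
  set N : ℝ := (eLpNorm η p μ).toReal with hNdef
  set X : ℝ := (eLpNorm ξ q μ).toReal with hXdef
  have hN0 : 0 ≤ N := ENNReal.toReal_nonneg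
  have hX0 : 0 ≤ X := ENNReal.toReal_nonneg
  have hαX : 0 ≤ α X := hnonneg X hX0
  have hα0 : 0 ≤ α 0 := hnonneg 0 le_rfl
  have hηint : Integrable η μ := hηp.integrable hp
  -- Integrability of ξ * η
  have hmul : Integrable (fun ω => ξ ω * η ω) μ := by
    have h1 : (1:ℝ≥0∞)/1 = 1/q + 1/p := by rw [one_div_one]; exact hpq.symm.trans (add_comm _ _)
    have := (hηp.smul hξq (p := q) (q := p) (r := 1) (hpqr := ⟨by simpa [one_div] using h1.symm⟩) : MemLp (ξ • η) 1 μ)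
    exact memLp_one_iff_integrable.mp this
  set c : ℝ := ∫ ω, η ω ∂μ with hcdef
  have hc0 : 0 ≤ c := integral_nonneg hη0
  -- c ≤ N
  have hcN : c ≤ N := by
    rw [hcdef, integral_eq_toReal_eLpNorm_one hηp.1 hη0]
    exact ENNReal.toReal_mono hηp.2.ne (eLpNorm_le_eLpNorm_of_exponent_le hp hηp.1)
  set I : ℝ := ∫ ω, ξ ω * η ω ∂μ with hIdef
  have hI0 : 0 ≤ I := integral_nonneg fun ω => mul_nonneg (hξ0 ω) (hη0 ω)
  -- Hölder: I ≤ X * N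
  have hIXN : I ≤ X * N := by
    have h1 : (1:ℝ≥0∞)/1 = 1/q + 1/p := by rw [one_div_one]; exact hpq.symm.trans (add_comm _ _)
    have hH := eLpNorm_smul_le_mul_eLpNorm hηp.1 hξq.1 (p := q) (q := p) (r := 1)
      (hpqr := ⟨by simpa [one_div] using h1.symm⟩)
    have heq : eLpNorm (ξ • η) 1 μ = eLpNorm (fun ω => ξ ω * η ω) 1 μ := rfl
    rw [hIdef, integral_eq_toReal_eLpNorm_one (hmul.1)
      (fun ω => mul_nonneg (hξ0 ω) (hη0 ω)), ← ENNReal.toReal_mul]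
    exact ENNReal.toReal_mono (ENNReal.mul_ne_top hξq.2.ne hηp.2.ne) (heq ▸ hH)
  rcases eq_or_lt_of_le hc0 with hc | hc
  · -- c = 0 : η = 0 a.e.
    have hη0' : η =ᵐ[μ] 0 := (integral_eq_zero_iff_of_nonneg hη0 hηint).mp hc.symm
    have : (fun ω => α (ξ ω) * η ω) =ᵐ[μ] 0 := by
      filter_upwards [hη0'] with ω hω
      simp [hω]
    rw [integral_congr_ae this]
    simp
    exact mul_nonneg hN0 hαX
  · rcases eq_or_lt_of_le hI0 with hI | hI
    · -- I = 0 : ξ η = 0 a.e.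
      have hξη0 : (fun ω => ξ ω * η ω) =ᵐ[μ] 0 :=
        (integral_eq_zero_iff_of_nonneg (fun ω => mul_nonneg (hξ0 ω) (hη0 ω)) hmul).mp hI.symm
      have heq : (fun ω => α (ξ ω) * η ω) =ᵐ[μ] (fun ω => α 0 * η ω) := by
        filter_upwards [hξη0] with ω hω
        rcases mul_eq_zero.mp hω with h | h
        · rw [h]
        · simp [h]
      rw [integral_congr_ae heq, integral_const_mul]
      have := concave_mono hconc hnonneg le_rfl hX0
      calc α 0 * c ≤ α X * N := by nlinarith
        _ = N * α X := mul_comm _ _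
    · -- main case : c > 0, I > 0
      set x : ℝ := I / c with hxdef
      have hx : 0 < x := div_pos hI hc
      obtain ⟨m, hm⟩ := concave_supergradient hconc hx
      have hxc : x * c = I := by rw [hxdef, div_mul_cancel₀ _ hc.ne']
      -- pointwise bound times η
      have hbound : ∀ ω, α (ξ ω) * η ω ≤ (α x - m * x) * η ω + m * (ξ ω * η ω) := by
        intro ω
        have := hm (ξ ω) (hξ0 ω)
        nlinarith [hη0 ω]
      have hrint : Integrable (fun ω => (α x - m * x) * η ω + m * (ξ ω * η ω)) μ :=
        (hηint.const_mul _).add (hmul.const_mul _)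
      have hstep : ∫ ω, α (ξ ω) * η ω ∂μ ≤ α x * c := by
        calc ∫ ω, α (ξ ω) * η ω ∂μ
            ≤ ∫ ω, ((α x - m * x) * η ω + m * (ξ ω * η ω)) ∂μ :=
              integral_mono hint hrint hbound
          _ = (α x - m * x) * c + m * I := by
              rw [integral_add (hηint.const_mul _) (hmul.const_mul _),
                integral_const_mul, integral_const_mul]
          _ = α x * c := by rw [← hxc]; ring
      refine hstep.trans ?_
      -- α x * c ≤ N * α X
      set lam : ℝ := N / c with hlamdef
      have hlam1 : 1 ≤ lam := (one_le_div hc).mpr hcN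
      have hxlX : x ≤ lam * X := by
        rw [hxdef, hlamdef, div_le_iff₀ hc]
        calc I ≤ X * N := hIXN
          _ = N / c * X * c := by field_simp
      have h1 : α x ≤ α (lam * X) :=
        concave_mono hconc hnonneg hx.le hxlX
      have h2 : α (lam * X) ≤ lam * α X := concave_scale hconc hα0 hX0 hlam1
      have hlc : lam * c = N := by rw [hlamdef, div_mul_cancel₀ _ hc.ne']
      calc α x * c ≤ lam * α X * c := by nlinarith
        _ = N * α X := by rw [← hlc]; ring
end

section
/- Let α : [0,∞) → [0,∞) be concave with α(0)=0, let (B, ‖·‖) be a Banach space, and let f : ℝᵈ → B be continuous with [f]_α := sup_{x≠y} ‖f(x)−f(y)‖/α(|x−y|) < ∞. Then for any ℝᵈ-valued random variable ξ, any real random variable η ∈ L^p(P) with E[η] = 0 and p ≥ 1, and any x ∈ ℝᵈ: ‖E[f(ξ)η]‖ ≤ [f]_α · ‖η‖_{L^p} · α(‖ξ − x‖_{L^{p/(p-1)}}). -/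
open MeasureTheory
open scoped ENNReal

/-- For concave `α : [0,∞) → [0,∞)` with `α 0 = 0`, a Banach space `B`,
continuous `f : ℝᵈ → B` with α-modulus `[f]_α ≤ M`, and a centered real random
variable `η ∈ L^p`, for any `x ∈ ℝᵈ`:
`‖E[f(ξ)η]‖ ≤ M ‖η‖_{L^p} α(‖ξ − x‖_{L^{q}})` with `1/p + 1/q = 1`. -/
theorem concave_holder_centered {Ω : Type*} [MeasurableSpace Ω]
    (μ : Measure Ω) [IsProbabilityMeasure μ]
    {B : Type*} [NormedAddCommGroup B] [NormedSpace ℝ B] [CompleteSpace B]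
    {d : ℕ}
    (α : ℝ → ℝ) (hconc : ConcaveOn ℝ (Set.Ici 0) α)
    (hnonneg : ∀ s, 0 ≤ s → 0 ≤ α s) (h0 : α 0 = 0)
    (f : EuclideanSpace ℝ (Fin d) → B) (hfcont : Continuous f)
    (M : ℝ) (hM : 0 ≤ M)
    (hf : ∀ x y : EuclideanSpace ℝ (Fin d), ‖f x - f y‖ ≤ M * α (dist x y))
    (ξ : Ω → EuclideanSpace ℝ (Fin d)) (η : Ω → ℝ)
    (hξm : AEMeasurable ξ μ)
    (p q : ℝ≥0∞) (hp : 1 ≤ p) (hpq : 1/p + 1/q = 1)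
    (hηp : MemLp η p μ) (hη0 : ∫ ω, η ω ∂μ = 0)
    (x : EuclideanSpace ℝ (Fin d))
    (hξq : MemLp (fun ω => ξ ω - x) q μ)
    (hint : Integrable (fun ω => η ω • f (ξ ω)) μ) :
    ‖∫ ω, η ω • f (ξ ω) ∂μ‖
      ≤ M * (eLpNorm η p μ).toReal
          * α ((eLpNorm (fun ω => ξ ω - x) q μ).toReal) := by
  have hq0 : q ≠ 0 := by
    intro h
    rw [h] at hpq
    simp [ENNReal.div_zero] at hpq
  -- monotonicity of α on [0, ∞)
  have hmono : ∀ s t : ℝ, 0 ≤ s → s ≤ t → α s ≤ α t := by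
    intro s t hs hst
    rcases eq_or_lt_of_le hst with rfl | hlt
    · exact le_refl _
    by_contra hcon
    push_neg at hcon
    have ht : 0 ≤ t := hs.trans hst
    have hαt : 0 ≤ α t := hnonneg t ht
    have hD : 0 < α s - α t := by linarith
    have hts : 0 < t - s := by linarith
    set u := t + (t - s) * α t / (α s - α t) + 1 with hu
    have htu : t < u := by
      have : 0 ≤ (t - s) * α t / (α s - α t) := by positivity
      simp only [hu]; linarith
    have hut : 0 < u - t := by linarith
    have hslope := hconc.slope_anti_adjacent (Set.mem_Ici.mpr hs)
      (Set.mem_Ici.mpr (ht.trans htu.le)) hlt htu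
    have h1 : α u - α t ≤ ((α t - α s)/(t - s)) * (u - t) := by
      calc α u - α t = ((α u - α t)/(u-t)) * (u - t) := by field_simp
      _ ≤ ((α t - α s)/(t - s)) * (u - t) := mul_le_mul_of_nonneg_right hslope hut.le
    have h2 : ((α t - α s)/(t - s)) * (u - t) = -(α t) - (α s - α t)/(t - s) := by
      rw [hu]; field_simp; ring
    have hunn := hnonneg u (ht.trans htu.le)
    have h3 : 0 < (α s - α t)/(t - s) := div_pos hD hts
    linarith
  set Z : Ω → ℝ := fun ω => ‖ξ ω - x‖ with hZdef
  have hZnn : ∀ ω, 0 ≤ Z ω := fun ω => norm_nonneg _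
  have hZq : MemLp Z q μ := hξq.norm
  set c : ℝ := (eLpNorm (fun ω => ξ ω - x) q μ).toReal with hc
  have hcZ : eLpNorm Z q μ = eLpNorm (fun ω => ξ ω - x) q μ := eLpNorm_norm _
  have hcnn : 0 ≤ c := ENNReal.toReal_nonneg
  set Np : ℝ := (eLpNorm η p μ).toReal with hNp
  have hNpnn : 0 ≤ Np := ENNReal.toReal_nonneg
  have hηm : AEStronglyMeasurable η μ := hηp.1
  have hηint : Integrable η μ := hηp.integrable hp
  have hfx : Integrable (fun ω => η ω • f x) μ := hηint.smul_const (f x)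
  rcases eq_or_lt_of_le hcnn with hc0 | hcpos
  · -- degenerate case c = 0 : ξ = x a.e.
    have hfin : eLpNorm (fun ω => ξ ω - x) q μ ≠ ⊤ := hξq.eLpNorm_lt_top.ne
    have he : eLpNorm (fun ω => ξ ω - x) q μ = 0 := by
      rcases ENNReal.toReal_eq_zero_iff _ |>.mp hc0.symm with h | h
      · exact h
      · exact absurd h hfin
    have hZ0 : (fun ω => ξ ω - x) =ᵐ[μ] 0 := (eLpNorm_eq_zero_iff hξq.1 hq0).mp he
    have hfconst : (fun ω => η ω • f (ξ ω)) =ᵐ[μ] fun ω => η ω • f x := by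
      filter_upwards [hZ0] with ω hω
      have : ξ ω = x := by
        have := sub_eq_zero.mp hω
        simpa using this
      rw [this]
    rw [integral_congr_ae hfconst, integral_smul_const, hη0, zero_smul, norm_zero,
      ← hc0, h0, mul_zero]
  -- main case c > 0 : build a supergradient m of α at c
  set S : Set ℝ := (fun u => (α u - α c)/(u - c)) '' Set.Ioi c with hS
  have hmemS : ∀ u, c < u → (α u - α c)/(u - c) ∈ S := fun u hu => ⟨u, hu, rfl⟩
  have hSne : S.Nonempty := ⟨_, hmemS (c+1) (lt_add_one c)⟩
  have hub : ∀ y ∈ S, y ≤ α c / c := by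
    rintro y ⟨u, hu, rfl⟩
    have := hconc.slope_anti_adjacent (Set.mem_Ici.mpr le_rfl)
      (Set.mem_Ici.mpr (hcnn.trans hu.le)) hcpos hu
    simpa [h0] using this
  have hbdd : BddAbove S := ⟨α c / c, hub⟩
  set m : ℝ := sSup S with hm
  have hm_le : m ≤ α c / c := csSup_le hSne hub
  have hmc : m * c ≤ α c := by
    have := mul_le_mul_of_nonneg_right hm_le hcnn
    rwa [div_mul_cancel₀ _ hcpos.ne'] at this
  have hm0 : 0 ≤ m := by
    refine le_trans ?_ (le_csSup hbdd (hmemS (c+1) (lt_add_one c)))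
    have := hmono c (c+1) hcnn (by linarith)
    apply div_nonneg <;> linarith
  have hkey : ∀ t, 0 ≤ t → α t ≤ α c + m * (t - c) := by
    intro t ht
    rcases lt_trichotomy t c with hlt | rfl | hgt
    · have hubt : ∀ y ∈ S, y ≤ (α c - α t)/(c - t) := by
        rintro y ⟨u, hu, rfl⟩
        exact hconc.slope_anti_adjacent (Set.mem_Ici.mpr ht)
          (Set.mem_Ici.mpr (hcnn.trans hu.le)) hlt hu
      have hA : m ≤ (α c - α t)/(c - t) := csSup_le hSne hubt
      have hct : 0 < c - t := by linarith
      have := mul_le_mul_of_nonneg_right hA hct.le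
      rw [div_mul_cancel₀ _ hct.ne'] at this
      linarith
    · simp
    · have hA : (α t - α c)/(t - c) ≤ m := le_csSup hbdd (hmemS t hgt)
      have htc : 0 < t - c := by linarith
      have := mul_le_mul_of_nonneg_right hA htc.le
      rw [div_mul_cancel₀ _ htc.ne'] at this
      linarith
  -- Hölder: ∫ |η| Z ≤ Np * c
  have hpqr : (1:ℝ≥0∞)/1 = 1/p + 1/q := by rw [hpq]; simp
  have hWmem : MemLp (η • Z) 1 μ := hZq.smul hηp (hpqr := ⟨by simpa [one_div] using hpqr.symm⟩)
  have hWint : Integrable (η • Z) μ := memLp_one_iff_integrable.mp hWmem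
  have hWeq : (fun ω => ‖(η • Z) ω‖) = fun ω => |η ω| * Z ω := by
    funext ω
    simp [Pi.smul_apply', smul_eq_mul, abs_mul, abs_of_nonneg (hZnn ω)]
  have hWabs : Integrable (fun ω => |η ω| * Z ω) μ := by
    have := hWint.norm
    rwa [show (fun a => ‖(η • Z) a‖) = fun ω => |η ω| * Z ω from hWeq] at this
  have hH : ∫ ω, |η ω| * Z ω ∂μ ≤ Np * c := by
    have h1 : eLpNorm (η • Z) 1 μ ≤ eLpNorm η p μ * eLpNorm Z q μ :=
      eLpNorm_smul_le_mul_eLpNorm hZq.1 hηm (hpqr := ⟨by simpa [one_div] using hpqr.symm⟩)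
    have h2 : ∫ ω, |η ω| * Z ω ∂μ = (eLpNorm (η • Z) 1 μ).toReal := by
      rw [eLpNorm_one_eq_lintegral_enorm, ← integral_norm_eq_lintegral_enorm hWmem.1]
      rw [hWeq]
    rw [h2]
    calc (eLpNorm (η • Z) 1 μ).toReal
        ≤ (eLpNorm η p μ * eLpNorm Z q μ).toReal :=
          ENNReal.toReal_mono (ENNReal.mul_ne_top hηp.eLpNorm_lt_top.ne hZq.eLpNorm_lt_top.ne) h1
      _ = Np * c := by rw [ENNReal.toReal_mul, hcZ]
  -- L¹ vs Lᵖ norm of η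
  have hI1 : ∫ ω, |η ω| ∂μ ≤ Np := by
    have h1 : eLpNorm η 1 μ ≤ eLpNorm η p μ := eLpNorm_le_eLpNorm_of_exponent_le hp hηm
    have h2 : ∫ ω, |η ω| ∂μ = (eLpNorm η 1 μ).toReal := by
      rw [eLpNorm_one_eq_lintegral_enorm, ← integral_norm_eq_lintegral_enorm hηm]
      simp [Real.norm_eq_abs]
    rw [h2]
    exact ENNReal.toReal_mono hηp.eLpNorm_lt_top.ne h1
  have hI1nn : 0 ≤ ∫ ω, |η ω| ∂μ := integral_nonneg fun ω => abs_nonneg _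
  -- centering
  have hcent : ∫ ω, η ω • f (ξ ω) ∂μ = ∫ ω, η ω • (f (ξ ω) - f x) ∂μ := by
    have : (fun ω => η ω • (f (ξ ω) - f x)) = fun ω => η ω • f (ξ ω) - η ω • f x := by
      funext ω; rw [smul_sub]
    rw [this, integral_sub hint hfx, integral_smul_const, hη0, zero_smul, sub_zero]
  -- pointwise bound
  set g : Ω → ℝ := fun ω => (M*(α c - m*c)) * |η ω| + (M*m) * (|η ω| * Z ω) with hg
  have hpt : ∀ ω, ‖η ω • (f (ξ ω) - f x)‖ ≤ g ω := by
    intro ω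
    have h1 : ‖f (ξ ω) - f x‖ ≤ M * α (Z ω) := by
      have := hf (ξ ω) x
      rwa [dist_eq_norm] at this
    have h2 : α (Z ω) ≤ α c + m * (Z ω - c) := hkey _ (hZnn ω)
    have h3 : ‖η ω • (f (ξ ω) - f x)‖ = |η ω| * ‖f (ξ ω) - f x‖ := by
      rw [norm_smul, Real.norm_eq_abs]
    rw [h3, hg]
    have h4 : |η ω| * ‖f (ξ ω) - f x‖ ≤ |η ω| * (M * (α c + m * (Z ω - c))) := by
      apply mul_le_mul_of_nonneg_left _ (abs_nonneg _)
      exact h1.trans (mul_le_mul_of_nonneg_left h2 hM)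
    refine h4.trans (le_of_eq ?_)
    ring
  have hgint : Integrable g μ := ((hηint.abs.const_mul _).add (hWabs.const_mul _))
  have hnint : Integrable (fun ω => η ω • (f (ξ ω) - f x)) μ := by
    have := hint.sub hfx
    refine this.congr (Filter.Eventually.of_forall fun ω => ?_)
    simp [smul_sub]
  calc ‖∫ ω, η ω • f (ξ ω) ∂μ‖
      = ‖∫ ω, η ω • (f (ξ ω) - f x) ∂μ‖ := by rw [hcent]
    _ ≤ ∫ ω, ‖η ω • (f (ξ ω) - f x)‖ ∂μ := norm_integral_le_integral_norm _
    _ ≤ ∫ ω, g ω ∂μ := integral_mono hnint.norm hgint hpt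
    _ = (M*(α c - m*c)) * (∫ ω, |η ω| ∂μ) + (M*m) * (∫ ω, |η ω| * Z ω ∂μ) := by
        rw [hg, integral_add (hηint.abs.const_mul _) (hWabs.const_mul _),
          integral_const_mul, integral_const_mul]
    _ ≤ M * Np * α c := by
        have hαc : 0 ≤ α c := hnonneg c hcnn
        nlinarith [mul_le_mul_of_nonneg_left hH (mul_nonneg hM hm0),
          mul_nonneg (mul_nonneg hM (sub_nonneg.mpr hmc)) (sub_nonneg.mpr hI1)]
end

section
/- For any probability measures μ, ν on ℝᵈ with finite second moments, the log-Harnack inequality P log f(μ̃) ≤ log P f(μ) + c·W₂(μ,μ̃)² for all positive bounded measurable f (where P g(γ) := ∫ g d(P*γ) for a map P* on probability measures) is equivalent to the entropy-cost inequality Ent(P*μ | P*μ̃) ≤ c·W₂(μ,μ̃)², where Ent(ν|μ) := ∫ ρ log ρ dμ if dν = ρ dμ and +∞ otherwise. -/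
open MeasureTheory
open scoped ENNReal

/-- Squared quadratic Wasserstein distance `W₂(μ,ν)²`, as an infimum over couplings. -/
noncomputable def W2sq {E : Type*} [MeasurableSpace E] [MetricSpace E]
    (μ ν : Measure E) : ℝ≥0∞ :=
  ⨅ π : {π : Measure (E × E) // π.map Prod.fst = μ ∧ π.map Prod.snd = ν},
    ∫⁻ p, ENNReal.ofReal (dist p.1 p.2 ^ 2) ∂π.1

/-- Relative entropy `Ent(ν|μ) = ∫ ρ log ρ dμ = ∫ log(dν/dμ) dν` if `ν ≪ μ` with
integrable log-likelihood ratio, and `∞` otherwise. -/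
noncomputable def Ent {E : Type*} [MeasurableSpace E] (ν μ : Measure E) : ℝ≥0∞ :=
  open Classical in
  if ν ≪ μ ∧ Integrable (llr ν μ) ν then ENNReal.ofReal (∫ x, llr ν μ x ∂ν) else ⊤

lemma W2sq_le_symm {E : Type*} [MeasurableSpace E] [MetricSpace E] [OpensMeasurableSpace E] [SecondCountableTopology E] (μ ν : Measure E) :
    W2sq ν μ ≤ W2sq μ ν := by
  refine le_iInf fun π => ?_
  refine iInf_le_of_le ⟨π.1.map Prod.swap, ?_, ?_⟩ ?_
  · rw [Measure.map_map measurable_fst measurable_swap]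
    exact π.2.2
  · rw [Measure.map_map measurable_snd measurable_swap]
    exact π.2.1
  · rw [lintegral_map (((measurable_fst.dist measurable_snd).pow_const 2).ennreal_ofReal) measurable_swap]
    simp [dist_comm]

lemma W2sq_symm {E : Type*} [MeasurableSpace E] [MetricSpace E] [OpensMeasurableSpace E] [SecondCountableTopology E] (μ ν : Measure E) :
    W2sq μ ν = W2sq ν μ :=
  le_antisymm (W2sq_le_symm ν μ) (W2sq_le_symm μ ν)


section Aux

variable {E : Type*} [MeasurableSpace E] {μ ν : Measure E}

lemma integrable_of_bdd' [IsFiniteMeasure μ] {f : E → ℝ} (hf : Measurable f) {C : ℝ}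
    (hC : ∀ x, |f x| ≤ C) : Integrable f μ :=
  (integrable_const C).mono' hf.aestronglyMeasurable (Filter.Eventually.of_forall hC)

lemma clamp_abs {t c : ℝ} (hc : 0 ≤ c) : |max (min t c) (-c)| ≤ |t| :=
  abs_le.2 ⟨le_trans (le_min (neg_abs_le t) (le_trans (neg_nonpos.2 (abs_nonneg t)) hc))
      (le_max_left _ _),
    max_le (le_trans (min_le_left _ _) (le_abs_self t)) (le_trans (neg_nonpos.2 hc) (abs_nonneg t))⟩

lemma log_nat_nonneg (n : ℕ) : 0 ≤ Real.log n := by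
  rcases Nat.eq_zero_or_pos n with h | h
  · simp [h]
  · exact Real.log_nonneg (by exact_mod_cast h)

lemma abs_cont_of_H [IsProbabilityMeasure μ] [IsProbabilityMeasure ν] {K : ℝ} (hK : 0 ≤ K)
    (H : ∀ f : E → ℝ, Measurable f → (∃ a b, 0 < a ∧ ∀ x, a ≤ f x ∧ f x ≤ b) →
      ∫ x, Real.log (f x) ∂ν ≤ Real.log (∫ x, f x ∂μ) + K) :
    ν ≪ μ := by
  classical
  refine Measure.AbsolutelyContinuous.mk fun s hs hμs => ?_
  by_contra hνs
  have hνs' : 0 < (ν s).toReal := ENNReal.toReal_pos hνs (measure_ne_top ν s)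
  set r : ℝ := (K + 1) / (ν s).toReal with hr
  have hrpos : 0 < r := by positivity
  set f : E → ℝ := fun x => if x ∈ s then Real.exp r else 1 with hfd
  have hfm : Measurable f := Measurable.ite hs measurable_const measurable_const
  have hbd : ∃ a b : ℝ, 0 < a ∧ ∀ x, a ≤ f x ∧ f x ≤ b := by
    refine ⟨1, Real.exp r, one_pos, fun x => ?_⟩
    by_cases hx : x ∈ s <;> simp [hfd, hx, Real.one_le_exp hrpos.le]
  have h1 : ∫ x, f x ∂μ = 1 := by
    have hae : f =ᵐ[μ] fun _ => 1 := by
      rw [Filter.EventuallyEq, ae_iff]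
      refine measure_mono_null (fun x hx => ?_) hμs
      by_contra hxs
      exact hx (by simp [hfd, hxs])
    rw [integral_congr_ae hae]; simp
  have h2 : ∫ x, Real.log (f x) ∂ν = r * (ν s).toReal := by
    have heq : (fun x => Real.log (f x)) = s.indicator fun _ => r := by
      ext x; by_cases hx : x ∈ s <;> simp [hfd, hx, Set.indicator, Real.log_exp]
    rw [heq, integral_indicator_const _ hs]; simp [mul_comm]; exact Or.inl rfl
  have hH := H f hfm hbd
  rw [h1, h2] at hH
  simp only [Real.log_one, zero_add] at hH
  rw [hr, div_mul_cancel₀ _ hνs'.ne'] at hH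
  linarith

lemma lintegral_neg_llr_le [IsProbabilityMeasure μ] [IsProbabilityMeasure ν] (hac : ν ≪ μ) :
    ∫⁻ x, ENNReal.ofReal (max (- llr ν μ x) 0) ∂ν ≤ ENNReal.ofReal (Real.exp (-1)) := by
  have key : ∀ s : ℝ, 0 < s → Real.log s ≤ s * Real.exp (-1) := by
    intro s hs
    have h := Real.log_le_sub_one_of_pos (mul_pos hs (Real.exp_pos (-1)))
    rw [Real.log_mul hs.ne' (Real.exp_pos _).ne', Real.log_exp] at h
    linarith
  rw [← lintegral_rnDeriv_mul hac (f := fun x => ENNReal.ofReal (max (- llr ν μ x) 0))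
    (((measurable_llr ν μ).neg.max measurable_const).ennreal_ofReal).aemeasurable]
  have hpt : ∀ᵐ x ∂μ, ν.rnDeriv μ x * ENNReal.ofReal (max (- llr ν μ x) 0)
      ≤ ENNReal.ofReal (Real.exp (-1)) := by
    filter_upwards [Measure.rnDeriv_lt_top ν μ] with x hx
    rcases eq_or_ne (ν.rnDeriv μ x) 0 with h0 | h0
    · simp [h0]
    · have hρpos : 0 < (ν.rnDeriv μ x).toReal := ENNReal.toReal_pos h0 hx.ne
      set ρ := (ν.rnDeriv μ x).toReal with hρ
      have hrw : ν.rnDeriv μ x = ENNReal.ofReal ρ := (ENNReal.ofReal_toReal hx.ne).symm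
      rw [hrw, ← ENNReal.ofReal_mul hρpos.le]
      apply ENNReal.ofReal_le_ofReal
      have hllr : llr ν μ x = Real.log ρ := rfl
      rcases le_or_gt 1 ρ with h1 | h1
      · rw [hllr, max_eq_right (neg_nonpos.2 (Real.log_nonneg h1)), mul_zero]
        exact (Real.exp_pos _).le
      · rw [hllr, max_eq_left (by
          have := Real.log_neg hρpos h1; linarith)]
        have hlog : -Real.log ρ = Real.log ρ⁻¹ := (Real.log_inv ρ).symm
        rw [hlog]
        calc ρ * Real.log ρ⁻¹ ≤ ρ * (ρ⁻¹ * Real.exp (-1)) :=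
          mul_le_mul_of_nonneg_left (key _ (inv_pos.2 hρpos)) hρpos.le
        _ = Real.exp (-1) := by field_simp
  calc ∫⁻ x, ν.rnDeriv μ x * ENNReal.ofReal (max (- llr ν μ x) 0) ∂μ
      ≤ ∫⁻ _, ENNReal.ofReal (Real.exp (-1)) ∂μ := lintegral_mono_ae hpt
    _ = ENNReal.ofReal (Real.exp (-1)) := by simp

lemma entropy_le [IsProbabilityMeasure μ] [IsProbabilityMeasure ν] {K : ℝ} (hK : 0 ≤ K)
    (H : ∀ f : E → ℝ, Measurable f → (∃ a b, 0 < a ∧ ∀ x, a ≤ f x ∧ f x ≤ b) →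
      ∫ x, Real.log (f x) ∂ν ≤ Real.log (∫ x, f x ∂μ) + K) :
    Ent ν μ ≤ ENNReal.ofReal K := by
  have hac : ν ≪ μ := abs_cont_of_H hK H
  set L := llr ν μ with hL
  have hLm : Measurable L := measurable_llr ν μ
  set φ : ℕ → E → ℝ := fun n x => max (min (L x) (Real.log n)) (-Real.log n) with hφ
  have hφm : ∀ n, Measurable (φ n) := fun n => (hLm.min measurable_const).max measurable_const
  have hφ_abs : ∀ n x, |φ n x| ≤ |L x| := fun n x => clamp_abs (log_nat_nonneg n)
  have hφ_bdd : ∀ n x, |φ n x| ≤ Real.log n := fun n x =>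
    abs_le.2 ⟨le_max_right _ _, max_le (min_le_right _ _) (neg_nonpos.2 (log_nat_nonneg n) |>.trans (log_nat_nonneg n))⟩
  have hφInt : ∀ n, Integrable (φ n) ν := fun n => integrable_of_bdd' (hφm n) (hφ_bdd n)
  -- main bound from H
  have hbound : ∀ n : ℕ, 1 ≤ n → ∫ x, φ n x ∂ν ≤ K + (n : ℝ)⁻¹ := by
    intro n hn
    have hn1 : (1:ℝ) ≤ (n:ℝ) := by exact_mod_cast hn
    have hninv : 0 < ((n:ℝ))⁻¹ := by positivity
    have hinvle : ((n:ℝ))⁻¹ ≤ (n:ℝ) := le_trans (inv_le_one_of_one_le₀ hn1) hn1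
    set f : E → ℝ := fun x => max (min ((ν.rnDeriv μ x).toReal) n) ((n:ℝ)⁻¹) with hfd
    have hfm : Measurable f :=
      ((Measure.measurable_rnDeriv ν μ).ennreal_toReal.min measurable_const).max measurable_const
    have hfub : ∀ x, f x ≤ (n:ℝ) := fun x => max_le (min_le_right _ _) hinvle
    have hbd : ∃ a b : ℝ, 0 < a ∧ ∀ x, a ≤ f x ∧ f x ≤ b :=
      ⟨(n:ℝ)⁻¹, n, hninv, fun x => ⟨le_max_right _ _, hfub x⟩⟩
    have hfInt : Integrable f μ := integrable_of_bdd' hfm (C := n) fun x => by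
      rw [abs_of_pos (lt_of_lt_of_le hninv (le_max_right _ _))]; exact hfub x
    have hfle : ∀ x, f x ≤ (ν.rnDeriv μ x).toReal + (n:ℝ)⁻¹ := fun x =>
      max_le ((min_le_left _ _).trans (le_add_of_nonneg_right hninv.le))
        (le_add_of_nonneg_left ENNReal.toReal_nonneg)
    have hIμ : ∫ x, f x ∂μ ≤ 1 + (n:ℝ)⁻¹ := by
      calc ∫ x, f x ∂μ ≤ ∫ x, ((ν.rnDeriv μ x).toReal + (n:ℝ)⁻¹) ∂μ :=
        integral_mono hfInt (Measure.integrable_toReal_rnDeriv.add (integrable_const _)) hfle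
      _ = 1 + (n:ℝ)⁻¹ := by
        rw [integral_add Measure.integrable_toReal_rnDeriv (integrable_const _),
          Measure.integral_toReal_rnDeriv hac, integral_const]
        simp
    have hIpos : 0 < ∫ x, f x ∂μ := by
      calc (0:ℝ) < (n:ℝ)⁻¹ := hninv
      _ = ∫ _, (n:ℝ)⁻¹ ∂μ := by simp
      _ ≤ ∫ x, f x ∂μ := integral_mono (integrable_const _) hfInt fun x => le_max_right _ _
    have hlogf : ∫ x, Real.log (f x) ∂ν = ∫ x, φ n x ∂ν := by
      refine integral_congr_ae ?_
      filter_upwards [Measure.rnDeriv_pos hac, hac.ae_le (Measure.rnDeriv_lt_top ν μ)]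
        with x hp hl
      have hρpos : 0 < (ν.rnDeriv μ x).toReal := ENNReal.toReal_pos hp.ne' hl.ne
      have hnpos : (0:ℝ) < n := lt_of_lt_of_le one_pos hn1
      have hLx : L x = Real.log ((ν.rnDeriv μ x).toReal) := rfl
      have hminpos : 0 < min ((ν.rnDeriv μ x).toReal) (n:ℝ) := lt_min hρpos hnpos
      have hlmin : Real.log (min ((ν.rnDeriv μ x).toReal) n) = min (L x) (Real.log n) := by
        rcases le_total ((ν.rnDeriv μ x).toReal) (n:ℝ) with h | h
        · rw [min_eq_left h, hLx, min_eq_left (Real.log_le_log hρpos h)]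
        · rw [min_eq_right h, hLx, min_eq_right (Real.log_le_log hnpos h)]
      have hlmax : Real.log (f x) = max (Real.log (min ((ν.rnDeriv μ x).toReal) n))
          (Real.log ((n:ℝ)⁻¹)) := by
        rcases le_total ((n:ℝ)⁻¹) (min ((ν.rnDeriv μ x).toReal) (n:ℝ)) with h | h
        · rw [hfd]; dsimp only
          rw [max_eq_left h, max_eq_left (Real.log_le_log hninv h)]
        · rw [hfd]; dsimp only
          rw [max_eq_right h, max_eq_right (Real.log_le_log hminpos h)]
      rw [hlmax, hlmin, Real.log_inv]
    have hH := H f hfm hbd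
    rw [hlogf] at hH
    have hlog1 : Real.log (∫ x, f x ∂μ) ≤ (n:ℝ)⁻¹ := by
      calc Real.log (∫ x, f x ∂μ) ≤ Real.log (1 + (n:ℝ)⁻¹) := Real.log_le_log hIpos hIμ
      _ ≤ (1 + (n:ℝ)⁻¹) - 1 := Real.log_le_sub_one_of_pos (by positivity)
      _ = (n:ℝ)⁻¹ := by ring
    linarith
  -- integrability of L
  have hnegInt : ∫⁻ x, ENNReal.ofReal (max (- L x) 0) ∂ν ≤ ENNReal.ofReal (Real.exp (-1)) :=
    lintegral_neg_llr_le hac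
  set C : ℝ := K + 1 + Real.exp (-1) with hC
  set ψ : ℕ → E → ℝ := fun n x => min (max (L x) 0) (Real.log n) with hψ
  have hψm : ∀ n, Measurable (ψ n) := fun n => (hLm.max measurable_const).min measurable_const
  have hψnn : ∀ n x, 0 ≤ ψ n x := fun n x => le_min (le_max_right _ _) (log_nat_nonneg n)
  have hψInt : ∀ n, Integrable (ψ n) ν := fun n => integrable_of_bdd' (hψm n)
    (C := Real.log n) fun x => by
      rw [abs_of_nonneg (hψnn n x)]; exact min_le_right _ _
  have hψle : ∀ n, ∫ x, ψ n x ∂ν ≤ C := by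
    intro n
    rcases Nat.eq_zero_or_pos n with h0 | hn
    · subst h0
      have : ∀ x, ψ 0 x = 0 := fun x => by
        simp only [hψ, Nat.cast_zero, Real.log_zero]
        exact min_eq_right (le_max_right _ _)
      simp only [this]
      rw [integral_zero]
      have : 0 ≤ C := by positivity
      linarith
    · have hcn : 0 ≤ Real.log n := log_nat_nonneg n
      have hid : ∀ x, ψ n x = φ n x + min (max (-L x) 0) (Real.log n) := by
        intro x
        simp only [hψ, hφ, min_def, max_def]
        split_ifs <;> linarith
      have hgm : Measurable fun x => min (max (-L x) 0) (Real.log n) :=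
        (hLm.neg.max measurable_const).min measurable_const
      have hgnn : ∀ x, 0 ≤ min (max (-L x) 0) (Real.log n) := fun x =>
        le_min (le_max_right _ _) hcn
      have hgInt : Integrable (fun x => min (max (-L x) 0) (Real.log n)) ν :=
        integrable_of_bdd' hgm (C := Real.log n) fun x => by
          rw [abs_of_nonneg (hgnn x)]; exact min_le_right _ _
      have hgle : ∫ x, min (max (-L x) 0) (Real.log n) ∂ν ≤ Real.exp (-1) := by
        have h1 : ENNReal.ofReal (∫ x, min (max (-L x) 0) (Real.log n) ∂ν)
            ≤ ENNReal.ofReal (Real.exp (-1)) := by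
          rw [ofReal_integral_eq_lintegral_ofReal hgInt
            (Filter.Eventually.of_forall hgnn)]
          refine le_trans (lintegral_mono fun x => ENNReal.ofReal_le_ofReal
            (min_le_left _ _)) hnegInt
        exact (ENNReal.ofReal_le_ofReal_iff (Real.exp_pos _).le).1 h1
      have hsum : ∫ x, ψ n x ∂ν = (∫ x, φ n x ∂ν) + ∫ x, min (max (-L x) 0) (Real.log n) ∂ν := by
        rw [← integral_add (hφInt n) hgInt]
        exact integral_congr_ae (Filter.Eventually.of_forall fun x => hid x)
      have hninv : ((n:ℝ))⁻¹ ≤ 1 := by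
        rw [inv_le_one_iff₀]; right; exact_mod_cast hn
      have := hbound n hn
      rw [hC]
      linarith
  -- positive part has finite lintegral
  have hposInt : ∫⁻ x, ENNReal.ofReal (max (L x) 0) ∂ν ≤ ENNReal.ofReal C := by
    have hmono : Monotone fun n : ℕ => fun x => ENNReal.ofReal (ψ n x) := by
      intro n m hnm
      intro x
      refine ENNReal.ofReal_le_ofReal (min_le_min le_rfl ?_)
      rcases Nat.eq_zero_or_pos n with h0 | hn
      · simp [h0]; exact log_nat_nonneg m
      · exact Real.log_le_log (by exact_mod_cast hn) (by exact_mod_cast hnm)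
    have hsup : ∀ x, (⨆ n, ENNReal.ofReal (ψ n x)) = ENNReal.ofReal (max (L x) 0) := by
      intro x
      refine le_antisymm (iSup_le fun n => ENNReal.ofReal_le_ofReal (min_le_left _ _)) ?_
      set N : ℕ := ⌈Real.exp (max (L x) 0)⌉₊ with hN
      have hle : Real.exp (max (L x) 0) ≤ (N:ℝ) := Nat.le_ceil _
      have hlogN : max (L x) 0 ≤ Real.log N := by
        rw [← Real.log_exp (max (L x) 0)]
        exact Real.log_le_log (Real.exp_pos _) hle
      refine le_iSup_of_le N (le_of_eq ?_)
      rw [hψ]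
      dsimp only
      rw [min_eq_left hlogN]
    have hmc := lintegral_iSup (μ := ν) (fun n => (hψm n).ennreal_ofReal) hmono
    have : ∫⁻ x, ENNReal.ofReal (max (L x) 0) ∂ν = ⨆ n, ∫⁻ x, ENNReal.ofReal (ψ n x) ∂ν := by
      rw [← hmc]
      exact lintegral_congr fun x => (hsup x).symm
    rw [this]
    refine iSup_le fun n => ?_
    rw [← ofReal_integral_eq_lintegral_ofReal (hψInt n)
      (Filter.Eventually.of_forall (hψnn n))]
    exact ENNReal.ofReal_le_ofReal (hψle n)
  have hLInt : Integrable L ν := by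
    refine ⟨hLm.aestronglyMeasurable, ?_⟩
    rw [hasFiniteIntegral_iff_norm]
    have habs : ∀ x, ENNReal.ofReal ‖L x‖ =
        ENNReal.ofReal (max (L x) 0) + ENNReal.ofReal (max (-L x) 0) := by
      intro x
      rw [← ENNReal.ofReal_add (le_max_right _ _) (le_max_right _ _)]
      congr 1
      rw [Real.norm_eq_abs]
      rcases le_total (L x) 0 with h | h
      · rw [abs_of_nonpos h, max_eq_right h, max_eq_left (by linarith)]; ring
      · rw [abs_of_nonneg h, max_eq_left h, max_eq_right (by linarith)]; ring
    simp only [habs]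
    rw [lintegral_add_left (hLm.max measurable_const).ennreal_ofReal]
    exact lt_of_le_of_lt (add_le_add hposInt hnegInt)
      (by simp [ENNReal.add_lt_top])
  -- dominated convergence
  have hptwise : ∀ x, Filter.Tendsto (fun n => φ n x) Filter.atTop (nhds (L x)) := by
    intro x
    have hev : ∀ᶠ n in Filter.atTop, φ n x = L x := by
      rw [Filter.eventually_atTop]
      refine ⟨⌈Real.exp |L x|⌉₊, fun m hm => ?_⟩
      have h1 : Real.exp |L x| ≤ (m:ℝ) := le_trans (Nat.le_ceil _) (by exact_mod_cast hm)
      have h2 : |L x| ≤ Real.log m := by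
        rw [← Real.log_exp |L x|]
        exact Real.log_le_log (Real.exp_pos _) h1
      rw [hφ]
      dsimp only
      rw [min_eq_left (le_trans (le_abs_self _) h2),
        max_eq_left (le_trans (neg_le_neg h2) (neg_abs_le _))]
    exact Filter.Tendsto.congr' (hev.mono fun n h => h.symm) tendsto_const_nhds
  have htend : Filter.Tendsto (fun n => ∫ x, φ n x ∂ν) Filter.atTop (nhds (∫ x, L x ∂ν)) := by
    refine tendsto_integral_of_dominated_convergence (fun x => |L x|)
      (fun n => (hφm n).aestronglyMeasurable) hLInt.abs
      (fun n => Filter.Eventually.of_forall fun x => ?_)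
      (Filter.Eventually.of_forall hptwise)
    rw [Real.norm_eq_abs]
    exact hφ_abs n x
  have hfinal : ∫ x, L x ∂ν ≤ K := by
    have hK' : Filter.Tendsto (fun n : ℕ => K + (n:ℝ)⁻¹) Filter.atTop (nhds K) := by
      have h0 : Filter.Tendsto (fun _ : ℕ => K) Filter.atTop (nhds K) := tendsto_const_nhds
      simpa using h0.add tendsto_inv_atTop_nhds_zero_nat
    refine le_of_tendsto_of_tendsto htend hK' ?_
    rw [Filter.EventuallyLE, Filter.eventually_atTop]
    exact ⟨1, hbound⟩
  rw [Ent, if_pos ⟨hac, hLInt⟩]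
  exact ENNReal.ofReal_le_ofReal hfinal


lemma gibbs [IsProbabilityMeasure μ] [IsProbabilityMeasure ν] (hac : ν ≪ μ)
    (hint : Integrable (llr ν μ) ν) {f : E → ℝ} (hf : Measurable f) {a b : ℝ}
    (ha : 0 < a) (hab : ∀ x, a ≤ f x ∧ f x ≤ b) :
    ∫ x, Real.log (f x) ∂ν ≤ Real.log (∫ x, f x ∂μ) + ∫ x, llr ν μ x ∂ν := by
  have hfpos : ∀ x, 0 < f x := fun x => ha.trans_le (hab x).1
  have hfb : ∀ x, f x ≤ b := fun x => (hab x).2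
  have hfInt : Integrable f μ := integrable_of_bdd' hf
    (fun x => by rw [abs_of_pos (hfpos x)]; exact hfb x)
  set M : ℝ := ∫ x, f x ∂μ with hM
  have hMpos : 0 < M := by
    have : a = ∫ _, a ∂μ := by simp
    calc 0 < a := ha
    _ = ∫ _, a ∂μ := this
    _ ≤ M := integral_mono (integrable_const a) hfInt fun x => (hab x).1
  -- the test function h
  set h : E → ℝ := fun x => f x / (M * (ν.rnDeriv μ x).toReal) with hh
  have hhmeas : Measurable h := hf.div ((measurable_const.mul
    (Measure.measurable_rnDeriv ν μ).ennreal_toReal))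
  have hhnn : ∀ x, 0 ≤ h x := fun x => div_nonneg (hfpos x).le (by positivity)
  -- lintegral bound
  have hlint : ∫⁻ x, ENNReal.ofReal (h x) ∂ν ≤ 1 := by
    rw [← lintegral_rnDeriv_mul hac (hhmeas.ennreal_ofReal).aemeasurable]
    have hptwise : ∀ᵐ x ∂μ, ν.rnDeriv μ x * ENNReal.ofReal (h x)
        ≤ ENNReal.ofReal (f x / M) := by
      filter_upwards [Measure.rnDeriv_lt_top ν μ] with x hx
      rcases eq_or_ne (ν.rnDeriv μ x) 0 with h0 | h0
      · simp [h0]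
      · have hρpos : 0 < (ν.rnDeriv μ x).toReal := ENNReal.toReal_pos h0 hx.ne
        have : ν.rnDeriv μ x = ENNReal.ofReal ((ν.rnDeriv μ x).toReal) := by
          rw [ENNReal.ofReal_toReal hx.ne]
        rw [this, ← ENNReal.ofReal_mul ENNReal.toReal_nonneg]
        apply ENNReal.ofReal_le_ofReal
        rw [hh]
        rw [mul_comm]
        rw [div_mul_eq_mul_div, mul_comm M _, ← div_div, mul_div_assoc]
        rw [div_self hρpos.ne']
        simp
    calc ∫⁻ x, ν.rnDeriv μ x * ENNReal.ofReal (h x) ∂μ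
        ≤ ∫⁻ x, ENNReal.ofReal (f x / M) ∂μ := lintegral_mono_ae hptwise
      _ = ENNReal.ofReal (∫ x, f x / M ∂μ) := (ofReal_integral_eq_lintegral_ofReal
            (hfInt.div_const M) (Filter.Eventually.of_forall fun x => div_nonneg (hfpos x).le hMpos.le)).symm
      _ = ENNReal.ofReal 1 := by rw [integral_div, div_self hMpos.ne']
      _ = 1 := ENNReal.ofReal_one
  have hhInt : Integrable h ν := by
    refine ⟨hhmeas.aestronglyMeasurable, ?_⟩
    rw [hasFiniteIntegral_iff_norm]
    have : ∀ x, ENNReal.ofReal ‖h x‖ = ENNReal.ofReal (h x) := fun x => by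
      rw [Real.norm_eq_abs, abs_of_nonneg (hhnn x)]
    simp_rw [this]
    exact lt_of_le_of_lt hlint ENNReal.one_lt_top
  have hintegral_h : ∫ x, h x ∂ν ≤ 1 := by
    have := integral_eq_lintegral_of_nonneg_ae (Filter.Eventually.of_forall hhnn)
      hhmeas.aestronglyMeasurable (μ := ν)
    rw [this]
    calc (∫⁻ x, ENNReal.ofReal (h x) ∂ν).toReal ≤ (1 : ℝ≥0∞).toReal :=
      ENNReal.toReal_mono (by simp) hlint
    _ = 1 := by simp
  -- pointwise inequality a.e. ν
  have hptwise : ∀ᵐ x ∂ν, Real.log (f x) - Real.log M - llr ν μ x ≤ h x - 1 := by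
    filter_upwards [Measure.rnDeriv_pos hac, hac.ae_le (Measure.rnDeriv_lt_top ν μ)]
      with x hpos hlt
    have hρpos : 0 < (ν.rnDeriv μ x).toReal := ENNReal.toReal_pos hpos.ne' hlt.ne
    have hhpos : 0 < h x := div_pos (hfpos x) (by positivity)
    have hlog : Real.log (h x) = Real.log (f x) - Real.log M - llr ν μ x := by
      rw [hh]
      rw [Real.log_div (hfpos x).ne' (by positivity), Real.log_mul hMpos.ne' hρpos.ne']
      rw [llr]
      ring
    rw [← hlog]
    exact Real.log_le_sub_one_of_pos hhpos
  have hlogfInt : Integrable (fun x => Real.log (f x)) ν := by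
    refine integrable_of_bdd' (hf.log) (C := max |Real.log a| |Real.log b|) fun x => ?_
    exact abs_le_max_abs_abs (Real.log_le_log ha (hab x).1) (Real.log_le_log (hfpos x) (hab x).2)
  have hLHSInt : Integrable (fun x => Real.log (f x) - Real.log M - llr ν μ x) ν :=
    (hlogfInt.sub (integrable_const _)).sub hint
  have h2 : ∫ x, (Real.log (f x) - Real.log M - llr ν μ x) ∂ν ≤ ∫ x, (h x - 1) ∂ν :=
    integral_mono_ae hLHSInt (hhInt.sub (integrable_const 1)) hptwise
  have eA : ∫ x, (Real.log (f x) - Real.log M) ∂ν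
      = (∫ x, Real.log (f x) ∂ν) - Real.log M := by
    rw [integral_sub hlogfInt (integrable_const _), integral_const]; simp
  have eB : ∫ x, (Real.log (f x) - Real.log M - llr ν μ x) ∂ν
      = (∫ x, (Real.log (f x) - Real.log M) ∂ν) - ∫ x, llr ν μ x ∂ν :=
    integral_sub (hlogfInt.sub (integrable_const _)) hint
  have eC : ∫ x, (h x - 1) ∂ν = (∫ x, h x ∂ν) - 1 := by
    rw [integral_sub hhInt (integrable_const 1), integral_const]; simp
  linarith

end Aux

/-- For a map `P*` on probability measures on `ℝᵈ` (with
`P f(γ) := ∫ f d(P*γ)`), the log-Harnack inequality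
`P (log f)(μ̃) ≤ log (P f (μ)) + c W₂(μ,μ̃)²` for all bounded positive measurable `f`
is equivalent to the entropy-cost inequality `Ent(P*μ | P*μ̃) ≤ c W₂(μ,μ̃)²`,
both quantified over probability measures `μ, μ̃` with finite second moments. -/

theorem logHarnack_iff_entropy_cost {d : ℕ}
    (Pstar : Measure (EuclideanSpace ℝ (Fin d)) → Measure (EuclideanSpace ℝ (Fin d)))
    (hPstar : ∀ γ : Measure (EuclideanSpace ℝ (Fin d)),
      IsProbabilityMeasure γ → IsProbabilityMeasure (Pstar γ))
    (c : ℝ) (hc : 0 ≤ c) :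
    (∀ γ γ' : Measure (EuclideanSpace ℝ (Fin d)),
        IsProbabilityMeasure γ → IsProbabilityMeasure γ' →
        Integrable (fun x => ‖x‖ ^ 2) γ → Integrable (fun x => ‖x‖ ^ 2) γ' →
        ∀ f : EuclideanSpace ℝ (Fin d) → ℝ, Measurable f →
        (∃ a b : ℝ, 0 < a ∧ ∀ x, a ≤ f x ∧ f x ≤ b) →
        ∫ x, Real.log (f x) ∂(Pstar γ')
          ≤ Real.log (∫ x, f x ∂(Pstar γ)) + c * (W2sq γ γ').toReal)
    ↔
    (∀ γ γ' : Measure (EuclideanSpace ℝ (Fin d)),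
        IsProbabilityMeasure γ → IsProbabilityMeasure γ' →
        Integrable (fun x => ‖x‖ ^ 2) γ → Integrable (fun x => ‖x‖ ^ 2) γ' →
        Ent (Pstar γ) (Pstar γ') ≤ ENNReal.ofReal (c * (W2sq γ γ').toReal)) := by
  constructor
  · intro LH γ γ' hγ hγ' hm hm'
    haveI := hPstar γ hγ
    haveI := hPstar γ' hγ'
    refine entropy_le (mul_nonneg hc ENNReal.toReal_nonneg) ?_
    intro f hf hbd
    have h := LH γ' γ hγ' hγ hm' hm f hf hbd
    rwa [W2sq_symm γ' γ] at h
  · intro EC γ γ' hγ hγ' hm hm' f hf hbd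
    haveI := hPstar γ hγ
    haveI := hPstar γ' hγ'
    have hEnt := EC γ' γ hγ' hγ hm' hm
    rw [W2sq_symm γ' γ] at hEnt
    have hK : 0 ≤ c * (W2sq γ γ').toReal := mul_nonneg hc ENNReal.toReal_nonneg
    by_cases hcond : (Pstar γ') ≪ (Pstar γ)
        ∧ Integrable (llr (Pstar γ') (Pstar γ)) (Pstar γ')
    · rw [Ent, if_pos hcond] at hEnt
      have hint : ∫ x, llr (Pstar γ') (Pstar γ) x ∂(Pstar γ')
          ≤ c * (W2sq γ γ').toReal := (ENNReal.ofReal_le_ofReal_iff hK).1 hEnt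
      obtain ⟨a, b, ha, hab⟩ := hbd
      have hg := gibbs hcond.1 hcond.2 hf ha hab
      linarith
    · rw [Ent, if_neg hcond] at hEnt
      exact absurd (top_le_iff.mp hEnt) ENNReal.ofReal_ne_top
end
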